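/- Suppose two C¹ functions Δμ, Δν on Π = [0,h]×[0,ε] vanish on the respective initial edges (Δμ(u,0) = 0, Δν(0,v) = 0) and satisfy |Δμ(u,v)| ≤ C∫₀ᵛ(|Δν| + Λ)(u,v')dv' and |Δν(u,v)| ≤ C∫₀ᵘ(|Δμ| + Λ)(u',v)du' for constants C, Λ ≥ 0. Then |Δν(u,v)| ≤ C'uΛ and |Δμ(u,v)| ≤ C'vΛ for a constant C' depending only on C, h, ε. -/

import Mathlib

open intervalIntegral Real Set

lemma aux_exp_int (L a : ℝ) (hL : L ≠ 0) :
    ∫ x in (0:ℝ)..a, Real.exp (L*x) = (Real.exp (L*a) - 1)/L := by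
  rw [intervalIntegral.integral_comp_mul_left Real.exp hL, mul_zero, integral_exp]
  simp [div_eq_inv_mul]

/-- contraction estimate for the differences of successive iterates.
If Δμ, Δν vanish on the initial edges and satisfy
|Δμ(u,v)| ≤ C∫₀ᵛ(|Δν(u,·)| + Λ) and |Δν(u,v)| ≤ C∫₀ᵘ(|Δμ(·,v)| + Λ) on
Π = [0,h]×[0,ε], then |Δν(u,v)| ≤ C'uΛ and |Δμ(u,v)| ≤ C'vΛ for a constant C'
depending only on C, h, ε. -/
theorem stmt19 (C h ε : ℝ) (hC : 0 ≤ C) (hh : 0 ≤ h) (hε : 0 ≤ ε) :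
    ∃ C' : ℝ, ∀ Λ : ℝ, 0 ≤ Λ → ∀ Δμ Δν : ℝ → ℝ → ℝ,
      ContinuousOn (fun p : ℝ × ℝ => Δμ p.1 p.2) (Set.Icc 0 h ×ˢ Set.Icc 0 ε) →
      ContinuousOn (fun p : ℝ × ℝ => Δν p.1 p.2) (Set.Icc 0 h ×ˢ Set.Icc 0 ε) →
      (∀ u ∈ Set.Icc (0:ℝ) h, Δμ u 0 = 0) →
      (∀ v ∈ Set.Icc (0:ℝ) ε, Δν 0 v = 0) →
      (∀ u ∈ Set.Icc (0:ℝ) h, ∀ v ∈ Set.Icc (0:ℝ) ε,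
        |Δμ u v| ≤ C * ∫ v' in (0:ℝ)..v, (|Δν u v'| + Λ)) →
      (∀ u ∈ Set.Icc (0:ℝ) h, ∀ v ∈ Set.Icc (0:ℝ) ε,
        |Δν u v| ≤ C * ∫ u' in (0:ℝ)..u, (|Δμ u' v| + Λ)) →
      ∀ u ∈ Set.Icc (0:ℝ) h, ∀ v ∈ Set.Icc (0:ℝ) ε,
        |Δν u v| ≤ C' * u * Λ ∧ |Δμ u v| ≤ C' * v * Λ := by
  obtain ⟨L, hLdef⟩ : ∃ L : ℝ, L = 2*C^2*ε + 1 := ⟨_, rfl⟩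
  have hL : 0 < L := by rw [hLdef]; positivity
  obtain ⟨r, hrdef⟩ : ∃ r : ℝ, r = C^2*ε*h + C*ε := ⟨_, rfl⟩
  have hr : 0 ≤ r := by rw [hrdef]; positivity
  obtain ⟨D, hDdef⟩ : ∃ D : ℝ, D = 2*r*Real.exp (L*h) := ⟨_, rfl⟩
  have hD : 0 ≤ D := by rw [hDdef]; positivity
  refine ⟨C*(D+1) + C*(C*(D+1)*h+1), ?_⟩
  intro Λ hΛ Δμ Δν hcμ hcν _hμ0 _hν0 hIμ hIν
  set K : Set (ℝ×ℝ) := Set.Icc (0:ℝ) h ×ˢ Set.Icc (0:ℝ) ε with hKdef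
  -- continuity along lines
  have hlineμ : ∀ v ∈ Set.Icc (0:ℝ) ε, ContinuousOn (fun u' => |Δμ u' v| + Λ) (Set.Icc 0 h) := by
    intro v hv
    have : ContinuousOn (fun u' => Δμ u' v) (Set.Icc 0 h) :=
      hcμ.comp (Continuous.continuousOn (by fun_prop : Continuous fun u' : ℝ => (u', v)))
        (fun u' hu' => Set.mk_mem_prod hu' hv)
    exact this.abs.add continuousOn_const
  have hlineν : ∀ u ∈ Set.Icc (0:ℝ) h, ContinuousOn (fun v' => |Δν u v'| + Λ) (Set.Icc 0 ε) := by
    intro u hu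
    have : ContinuousOn (fun v' => Δν u v') (Set.Icc 0 ε) :=
      hcν.comp (Continuous.continuousOn (by fun_prop : Continuous fun v' : ℝ => (u, v')))
        (fun v' hv' => Set.mk_mem_prod hu hv')
    exact this.abs.add continuousOn_const
  have hintμ : ∀ v ∈ Set.Icc (0:ℝ) ε, ∀ u ∈ Set.Icc (0:ℝ) h,
      IntervalIntegrable (fun u' => |Δμ u' v| + Λ) MeasureTheory.volume 0 u := by
    intro v hv u hu
    have hsub : Set.uIcc (0:ℝ) u ⊆ Set.Icc 0 h := by
      rw [Set.uIcc_of_le hu.1]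
      exact Set.Icc_subset_Icc le_rfl hu.2
    exact ((hlineμ v hv).mono hsub).intervalIntegrable
  have hintν : ∀ u ∈ Set.Icc (0:ℝ) h, ∀ v ∈ Set.Icc (0:ℝ) ε,
      IntervalIntegrable (fun v' => |Δν u v'| + Λ) MeasureTheory.volume 0 v := by
    intro u hu v hv
    have hsub : Set.uIcc (0:ℝ) v ⊆ Set.Icc 0 ε := by
      rw [Set.uIcc_of_le hv.1]
      exact Set.Icc_subset_Icc le_rfl hv.2
    exact ((hlineν u hu).mono hsub).intervalIntegrable
  -- the weighted sup
  set F : ℝ×ℝ → ℝ := fun p => |Δμ p.1 p.2| * Real.exp (-(L * p.1)) with hFdef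
  have hKcomp : IsCompact K := (isCompact_Icc).prod isCompact_Icc
  have hFcont : ContinuousOn F K :=
    hcμ.abs.mul (Continuous.continuousOn (by fun_prop))
  have hbdd : BddAbove (F '' K) := (hKcomp.image_of_continuousOn hFcont).bddAbove
  have h00 : ((0:ℝ),(0:ℝ)) ∈ K := Set.mk_mem_prod ⟨le_rfl, hh⟩ ⟨le_rfl, hε⟩
  have hne : (F '' K).Nonempty := ⟨F (0,0), ⟨(0,0), h00, rfl⟩⟩
  obtain ⟨S, hSdef⟩ : ∃ S : ℝ, S = sSup (F '' K) := ⟨_, rfl⟩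
  have hS0 : 0 ≤ S := by
    rw [hSdef]
    exact le_trans (by positivity) (le_csSup hbdd ⟨(0,0), h00, rfl⟩)
  have hpt : ∀ u ∈ Set.Icc (0:ℝ) h, ∀ v ∈ Set.Icc (0:ℝ) ε,
      |Δμ u v| ≤ S * Real.exp (L*u) := by
    intro u hu v hv
    have hF : |Δμ u v| * Real.exp (-(L*u)) ≤ S := by
      rw [hSdef]; exact le_csSup hbdd ⟨(u,v), Set.mk_mem_prod hu hv, rfl⟩
    have hpos : (0:ℝ) < Real.exp (L*u) := Real.exp_pos _
    calc |Δμ u v| = (|Δμ u v| * Real.exp (-(L*u))) * Real.exp (L*u) := by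
          rw [mul_assoc, ← Real.exp_add]; simp
      _ ≤ S * Real.exp (L*u) := mul_le_mul_of_nonneg_right hF hpos.le
  -- main estimate
  have hmain : ∀ u ∈ Set.Icc (0:ℝ) h, ∀ v ∈ Set.Icc (0:ℝ) ε,
      |Δμ u v| ≤ (1/2) * (S * Real.exp (L*u)) + r*Λ := by
    intro u hu v hv
    obtain ⟨B, hBdef⟩ : ∃ B : ℝ, B = C*(S*Real.exp (L*u)/L + Λ*h) + Λ := ⟨_, rfl⟩
    have hB0 : 0 ≤ B := by rw [hBdef]; positivity
    -- inner bound: for each v' ∈ [0, ε], |Δν u v'| + Λ ≤ B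
    have hinner : ∀ v' ∈ Set.Icc (0:ℝ) ε, |Δν u v'| + Λ ≤ B := by
      intro v' hv'
      have h2 := hIν u hu v' hv'
      have hmono : (∫ u' in (0:ℝ)..u, (|Δμ u' v'| + Λ)) ≤
          ∫ u' in (0:ℝ)..u, (S * Real.exp (L*u') + Λ) := by
        apply intervalIntegral.integral_mono_on hu.1 (hintμ v' hv' u hu)
          ((Continuous.continuousOn (by fun_prop)).intervalIntegrable)
        intro x hx
        exact add_le_add_left (hpt x ⟨hx.1, hx.2.trans hu.2⟩ v' hv') Λ
      have hcomp : (∫ u' in (0:ℝ)..u, (S * Real.exp (L*u') + Λ))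
          = S * ((Real.exp (L*u) - 1)/L) + Λ * u := by
        rw [intervalIntegral.integral_add
          ((Continuous.intervalIntegrable (by fun_prop) _ _)) intervalIntegrable_const,
          intervalIntegral.integral_const_mul, aux_exp_int L u hL.ne',
          intervalIntegral.integral_const, smul_eq_mul, sub_zero, mul_comm Λ u, mul_comm u Λ]
      have hd : (Real.exp (L*u) - 1)/L ≤ Real.exp (L*u)/L :=
        (div_le_div_iff_of_pos_right hL).mpr (by linarith)
      have hle2 : S * ((Real.exp (L*u) - 1)/L) + Λ * u ≤ S*Real.exp (L*u)/L + Λ*h := by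
        have h1 : S * ((Real.exp (L*u) - 1)/L) ≤ S * Real.exp (L*u)/L := by
          rw [mul_div_assoc]
          exact mul_le_mul_of_nonneg_left hd hS0
        have h2' : Λ * u ≤ Λ * h := mul_le_mul_of_nonneg_left hu.2 hΛ
        linarith
      have hb : |Δν u v'| ≤ C * (S*Real.exp (L*u)/L + Λ*h) := by
        refine h2.trans (mul_le_mul_of_nonneg_left ?_ hC)
        rw [← hcomp] at hle2; exact hmono.trans hle2
      rw [hBdef]; linarith
    have h1 := hIμ u hu v hv
    have houter : (∫ v' in (0:ℝ)..v, (|Δν u v'| + Λ)) ≤ v * B := by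
      calc (∫ v' in (0:ℝ)..v, (|Δν u v'| + Λ)) ≤ ∫ _v' in (0:ℝ)..v, B := by
            apply intervalIntegral.integral_mono_on hv.1 (hintν u hu v hv) intervalIntegrable_const
            intro x hx
            exact hinner x ⟨hx.1, hx.2.trans hv.2⟩
        _ = v * B := by rw [intervalIntegral.integral_const, smul_eq_mul, sub_zero]
    have hvB : v * B ≤ ε * B := mul_le_mul_of_nonneg_right hv.2 hB0
    have hfin : |Δμ u v| ≤ C * (ε * B) :=
      h1.trans (mul_le_mul_of_nonneg_left (houter.trans hvB) hC)
    -- C * ε * B ≤ (1/2) S exp(Lu) + r Λ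
    have hexp : (0:ℝ) < Real.exp (L*u) := Real.exp_pos _
    have hq : C^2*ε/L ≤ 1/2 := by
      rw [div_le_iff₀ hL, hLdef]; nlinarith [sq_nonneg C]
    have hkey : C * (ε * B) ≤ (1/2) * (S * Real.exp (L*u)) + r*Λ := by
      have hBexp : C * (ε * B) = (C^2*ε/L)*(S*Real.exp (L*u)) + (C^2*ε*h + C*ε)*Λ := by
        rw [hBdef]; ring
      rw [hBexp, hrdef]
      have hfrac : (C^2*ε/L)*(S*Real.exp (L*u)) ≤ (1/2) * (S * Real.exp (L*u)) :=
        mul_le_mul_of_nonneg_right hq (by positivity)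
      linarith
    exact hfin.trans hkey
  -- conclude S ≤ 2 r Λ
  have hSle' : sSup (F '' K) ≤ S/2 + r*Λ := by
    apply csSup_le hne
    rintro x ⟨⟨u, v⟩, ⟨hu, hv⟩, rfl⟩
    have hm := hmain u hu v hv
    have hexp1 : Real.exp (-(L*u)) ≤ 1 := by
      rw [Real.exp_le_one_iff]
      have : 0 ≤ L*u := mul_nonneg hL.le hu.1
      linarith
    have hexpp : (0:ℝ) < Real.exp (-(L*u)) := Real.exp_pos _
    have hee : Real.exp (L*u) * Real.exp (-(L*u)) = 1 := by rw [← Real.exp_add]; simp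
    calc F (u, v) = |Δμ u v| * Real.exp (-(L*u)) := rfl
      _ ≤ ((1/2) * (S * Real.exp (L*u)) + r*Λ) * Real.exp (-(L*u)) :=
          mul_le_mul_of_nonneg_right hm hexpp.le
      _ = S/2 + r*Λ * Real.exp (-(L*u)) := by linear_combination (S/2) * hee
      _ ≤ S/2 + r*Λ := by
          have := mul_le_of_le_one_right (mul_nonneg hr hΛ) hexp1
          linarith
  have hSle : S ≤ S/2 + r*Λ := hSdef.trans_le hSle'
  have hS2 : S ≤ 2*r*Λ := by linarith
  -- uniform bound |Δμ| ≤ D Λ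
  have hDbound : ∀ u ∈ Set.Icc (0:ℝ) h, ∀ v ∈ Set.Icc (0:ℝ) ε, |Δμ u v| ≤ D * Λ := by
    intro u hu v hv
    have h1 := hpt u hu v hv
    have hexpm : Real.exp (L*u) ≤ Real.exp (L*h) :=
      Real.exp_le_exp.mpr (mul_le_mul_of_nonneg_left hu.2 hL.le)
    calc |Δμ u v| ≤ S * Real.exp (L*u) := h1
      _ ≤ (2*r*Λ) * Real.exp (L*h) :=
          mul_le_mul hS2 hexpm (Real.exp_pos _).le (by positivity)
      _ = D * Λ := by rw [hDdef]; ring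
  -- the bound |Δν u v| ≤ C (D+1) u Λ for all (u,v) ∈ Π
  have hνbd : ∀ u ∈ Set.Icc (0:ℝ) h, ∀ v ∈ Set.Icc (0:ℝ) ε,
      |Δν u v| ≤ C*(D+1) * u * Λ := by
    intro u hu v hv
    have h2 := hIν u hu v hv
    have hint : (∫ u' in (0:ℝ)..u, (|Δμ u' v| + Λ)) ≤ u * (D*Λ + Λ) := by
      calc (∫ u' in (0:ℝ)..u, (|Δμ u' v| + Λ)) ≤ ∫ _u' in (0:ℝ)..u, (D*Λ + Λ) := by
            apply intervalIntegral.integral_mono_on hu.1 (hintμ v hv u hu) intervalIntegrable_const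
            intro x hx
            exact add_le_add_left (hDbound x ⟨hx.1, hx.2.trans hu.2⟩ v hv) Λ
        _ = u * (D*Λ + Λ) := by rw [intervalIntegral.integral_const, smul_eq_mul, sub_zero]
    calc |Δν u v| ≤ C * (u * (D*Λ + Λ)) := h2.trans (mul_le_mul_of_nonneg_left hint hC)
      _ = C*(D+1) * u * Λ := by ring
  -- final bounds
  intro u hu v hv
  have hCD1 : (0:ℝ) ≤ C*(D+1) := mul_nonneg hC (by linarith)
  have hμb : |Δμ u v| ≤ C*(C*(D+1)*h+1) * v * Λ := by
    have h1 := hIμ u hu v hv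
    have hint : (∫ v' in (0:ℝ)..v, (|Δν u v'| + Λ)) ≤ v * (C*(D+1)*h*Λ + Λ) := by
      calc (∫ v' in (0:ℝ)..v, (|Δν u v'| + Λ)) ≤ ∫ _v' in (0:ℝ)..v, (C*(D+1)*h*Λ + Λ) := by
            apply intervalIntegral.integral_mono_on hv.1 (hintν u hu v hv) intervalIntegrable_const
            intro x hx
            have hb := hνbd u hu x ⟨hx.1, hx.2.trans hv.2⟩
            have huh : C*(D+1) * u * Λ ≤ C*(D+1)*h*Λ :=
              mul_le_mul_of_nonneg_right (mul_le_mul_of_nonneg_left hu.2 hCD1) hΛ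
            linarith
        _ = v * (C*(D+1)*h*Λ + Λ) := by
            rw [intervalIntegral.integral_const, smul_eq_mul, sub_zero]
    calc |Δμ u v| ≤ C * (v * (C*(D+1)*h*Λ + Λ)) := h1.trans (mul_le_mul_of_nonneg_left hint hC)
      _ = C*(C*(D+1)*h+1) * v * Λ := by ring
  have huΛ : (0:ℝ) ≤ u * Λ := mul_nonneg hu.1 hΛ
  have hvΛ : (0:ℝ) ≤ v * Λ := mul_nonneg hv.1 hΛ
  have hc2 : (0:ℝ) ≤ C*(C*(D+1)*h+1) := by positivity
  constructor
  · calc |Δν u v| ≤ C*(D+1) * u * Λ := hνbd u hu v hv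
      _ ≤ (C*(D+1) + C*(C*(D+1)*h+1)) * u * Λ := by nlinarith
  · calc |Δμ u v| ≤ C*(C*(D+1)*h+1) * v * Λ := hμb
      _ ≤ (C*(D+1) + C*(C*(D+1)*h+1)) * v * Λ := by nlinarith
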